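/- arXiv:2507.21818 — 4 statements merged into one kernel-verified Lean document; each statement's English description precedes it below -/
import Mathlib

section
/- Let $\Phi \in H^\infty_{\mathcal{B}(E_2, E)}(\mathbb{T})$ be an inner function and let $\mathcal{G}_\Phi = \{(g, y) \in H^2_E(\mathbb{T}) \oplus E : g = (\Phi x - \sigma y)/(z - e^{i\theta}) \text{ for some } x \in E_2\}$. If $(g, y) \in \mathcal{G}_\Phi$ is nonzero, then $g$ lies in the model space $\mathcal{K}_\Phi = H^2_E(\mathbb{T}) \ominus \Phi H^2_{E_2}(\mathbb{T})$. -/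
open Complex

noncomputable section
set_option linter.unusedSectionVars false

/-- The `E`-valued Hardy space `H²_E(𝕋)`, modeled by the ℓ² space of its
Taylor/Fourier coefficient sequences. -/
abbrev Hardy (E : Type*) [NormedAddCommGroup E] [InnerProductSpace ℂ E] [CompleteSpace E] :=
  lp (fun _ : ℕ => E) 2

variable {E : Type*} [NormedAddCommGroup E] [InnerProductSpace ℂ E] [CompleteSpace E]

def shiftSeq (f : ℕ → E) : ℕ → E
  | 0 => 0
  | n + 1 => f n

lemma memℓp_shiftSeq {f : ℕ → E} (hf : Memℓp f 2) : Memℓp (shiftSeq f) 2 := by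
  have h := hf.summable (by norm_num)
  exact memℓp_gen ((summable_nat_add_iff 1).mp (by simpa [shiftSeq] using h))

/-- The shift `S_E : f ↦ z f` on `H²_E(𝕋)`. -/
def shiftOp (f : Hardy E) : Hardy E := ⟨shiftSeq f, memℓp_shiftSeq (lp.memℓp f)⟩

/-- The inclusion `i_E : E → H²_E(𝕋)` sending `x` to the constant function `x`. -/
def inclOp (y : E) : Hardy E := lp.single 2 (0 : ℕ) y

/-- The Brownian shift `B^E_{σ, e^{iθ}}` of covariance `σ` and angle `θ` on
`H²_E(𝕋) ⊕ E`: `(f, y) ↦ (zf + σ y, e^{iθ} y)`. -/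
def BS (σ θ : ℝ) (v : Hardy E × E) : Hardy E × E :=
  (shiftOp v.1 + (σ : ℂ) • inclOp v.2, Complex.exp (θ * I) • v.2)

/-! ### Auxiliary lemmas -/

local notation "⟪" x ", " y "⟫" => inner (𝕜 := ℂ) x y

lemma shiftOp_apply_zero (f : Hardy E) : (shiftOp f : ℕ → E) 0 = 0 := rfl

lemma shiftOp_apply_succ (f : Hardy E) (n : ℕ) : (shiftOp f : ℕ → E) (n + 1) = f n := rfl

lemma memℓp_tail (g : Hardy E) (n : ℕ) : Memℓp (fun j => (g : ℕ → E) (j + n)) 2 := by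
  have h := (lp.memℓp g).summable (p := 2) (by norm_num)
  exact memℓp_gen ((summable_nat_add_iff n).mpr h)

/-- The sequence `j ↦ g (j + n)`, i.e. `(S*)^n g`, as an element of `H²`. -/
def tailLp (n : ℕ) (g : Hardy E) : Hardy E := ⟨fun j => g (j + n), memℓp_tail g n⟩

lemma tailLp_apply (n : ℕ) (g : Hardy E) (j : ℕ) : (tailLp n g : ℕ → E) j = g (j + n) := rfl

lemma inner_shiftOp_left (u : Hardy E) (w : Hardy E) :
    ⟪shiftOp u, w⟫ = ⟪u, tailLp 1 w⟫ := by
  rw [lp.inner_eq_tsum, lp.inner_eq_tsum,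
    Summable.tsum_eq_zero_add (lp.summable_inner (𝕜 := ℂ) (shiftOp u) w)]
  simp only [shiftOp_apply_zero, shiftOp_apply_succ, inner_zero_left, zero_add, tailLp_apply]

lemma tailLp_one_shiftOp (v : Hardy E) : tailLp 1 (shiftOp v) = v := by
  apply lp.ext; funext j; rfl

lemma inner_shiftOp_shiftOp (u v : Hardy E) : ⟪shiftOp u, shiftOp v⟫ = ⟪u, v⟫ := by
  rw [inner_shiftOp_left, tailLp_one_shiftOp]

lemma inner_shiftOp_inclOp (u : Hardy E) (y : E) : ⟪shiftOp u, inclOp y⟫ = 0 := by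
  rw [inclOp, lp.inner_single_right, shiftOp_apply_zero, inner_zero_left]

lemma tailLp_zero (g : Hardy E) : tailLp 0 g = g := by
  apply lp.ext; funext j; rfl

lemma tailLp_tailLp (n : ℕ) (g : Hardy E) : tailLp n (tailLp 1 g) = tailLp (n + 1) g := by
  apply lp.ext; funext j
  rfl

lemma inner_shiftOp_iterate (n : ℕ) (u g : Hardy E) :
    ⟪shiftOp^[n] u, g⟫ = ⟪u, tailLp n g⟫ := by
  induction n generalizing g with
  | zero => simp [tailLp_zero]
  | succ n ih =>
    rw [Function.iterate_succ_apply', inner_shiftOp_left, ih, tailLp_tailLp]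

lemma shiftOp_single (n : ℕ) (c : E) :
    shiftOp (lp.single 2 n c) = lp.single 2 (n + 1) c := by
  apply lp.ext; funext k
  match k with
  | 0 =>
    rw [shiftOp_apply_zero, lp.single_apply_ne _ _ _ (by omega : (0:ℕ) ≠ n + 1)]
  | j + 1 =>
    rw [shiftOp_apply_succ]
    rcases eq_or_ne j n with rfl | hj
    · rw [lp.single_apply_self, lp.single_apply_self]
    · rw [lp.single_apply_ne _ _ _ hj, lp.single_apply_ne _ _ _ (by omega : j + 1 ≠ n + 1)]

lemma iterate_shiftOp_inclOp (n : ℕ) (c : E) :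
    shiftOp^[n] (inclOp c) = lp.single 2 n c := by
  induction n with
  | zero => rfl
  | succ n ih => rw [Function.iterate_succ_apply', ih, shiftOp_single]

lemma norm_tailLp (g : Hardy E) (n : ℕ) :
    ‖tailLp n g‖ = (∑' j, ‖(g : ℕ → E) (j + n)‖ ^ (2:ℝ)) ^ ((1:ℝ)/2) := by
  rw [lp.norm_eq_tsum_rpow (by norm_num) (tailLp n g)]
  norm_num [tailLp_apply]

lemma tendsto_norm_tailLp (g : Hardy E) :
    Filter.Tendsto (fun n => ‖tailLp n g‖) Filter.atTop (nhds 0) := by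
  have h1 : Filter.Tendsto (fun n => ∑' j, ‖(g : ℕ → E) (j + n)‖ ^ (2:ℝ))
      Filter.atTop (nhds 0) := tendsto_sum_nat_add fun j => ‖(g : ℕ → E) j‖ ^ (2:ℝ)
  have h2 : ContinuousAt (fun x : ℝ => x ^ ((1:ℝ)/2)) 0 :=
    Real.continuousAt_rpow_const 0 _ (Or.inr (by norm_num))
  have := h2.tendsto.comp h1
  simp only [Function.comp_def] at this
  rw [Real.zero_rpow (by norm_num)] at this
  simpa [norm_tailLp] using this

/-- Lemma 2.2 (first part): if `(g, y) ∈ 𝒢_Φ` is nonzero, where `Φ` is an inner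
multiplier (modeled by an isometric multiplication operator `T` commuting with the shift),
then `g` lies in the model space `𝒦_Φ = H²_E ⊖ Φ H²_{E₂}`. -/
theorem defect_vector_in_model_space
    {E₂ : Type*} [NormedAddCommGroup E₂] [InnerProductSpace ℂ E₂] [CompleteSpace E₂]
    (σ θ : ℝ) (hσ : 0 < σ) (hθ : θ ∈ Set.Ico 0 (2 * Real.pi))
    (T : Hardy E₂ →L[ℂ] Hardy E)
    (hTiso : ∀ h : Hardy E₂, ‖T h‖ = ‖h‖)
    (hTcomm : ∀ h : Hardy E₂, T (shiftOp h) = shiftOp (T h))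
    (g : Hardy E) (y : E) (hne : ¬(g = 0 ∧ y = 0)) (x : E₂)
    (heq : shiftOp g + (σ : ℂ) • inclOp y = Complex.exp (θ * I) • g + T (inclOp x)) :
    ∀ h : Hardy E₂, inner (𝕜 := ℂ) (T h) g = 0 := by
  -- T as a linear isometry
  set Tiso : Hardy E₂ →ₗᵢ[ℂ] Hardy E := ⟨T.toLinearMap, hTiso⟩ with hTisodef
  have hTiso_apply : ∀ h, Tiso h = T h := fun _ => rfl
  -- T commutes with iterates of the shift
  have hTcommIter : ∀ (n : ℕ) (h : Hardy E₂), T (shiftOp^[n] h) = shiftOp^[n] (T h) := by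
    intro n
    induction n with
    | zero => intro h; rfl
    | succ n ih =>
      intro h
      rw [Function.iterate_succ_apply', Function.iterate_succ_apply', hTcomm, ih]
  -- key step: for each `c : E₂`, the quantities `a n = ⟪S^n (T i c), g⟫` vanish
  have key : ∀ (n : ℕ) (c : E₂), ⟪T (lp.single 2 n c), g⟫ = 0 := by
    intro n c
    set a : ℕ → ℂ := fun n => ⟪shiftOp^[n] (T (inclOp c)), g⟫ with ha
    -- recurrence: a n = e^{iθ} * a (n+1)
    have hrec : ∀ m, a m = Complex.exp (θ * I) * a (m + 1) := by
      intro m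
      have h1 : ⟪shiftOp^[m + 1] (T (inclOp c)), shiftOp g + (σ : ℂ) • inclOp y⟫ =
          ⟪shiftOp^[m + 1] (T (inclOp c)), Complex.exp (θ * I) • g + T (inclOp x)⟫ := by
        rw [heq]
      have h2 : ⟪shiftOp^[m + 1] (T (inclOp c)), T (inclOp x)⟫ = 0 := by
        rw [← hTcommIter, ← hTiso_apply, ← hTiso_apply, Tiso.inner_map_map,
          Function.iterate_succ_apply', inner_shiftOp_inclOp]
      rw [inner_add_right, inner_add_right, inner_smul_right, inner_smul_right, h2,
        add_zero] at h1
      rw [Function.iterate_succ_apply'] at h1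
      rw [inner_shiftOp_shiftOp, inner_shiftOp_inclOp, mul_zero, add_zero] at h1
      rw [ha]
      simpa [Function.iterate_succ_apply'] using h1
    -- the norms ‖a m‖ are all equal to ‖a 0‖
    have hnorm : ∀ m, ‖a m‖ = ‖a 0‖ := by
      intro m
      induction m with
      | zero => rfl
      | succ m ih =>
        have hexp : ‖Complex.exp (θ * I)‖ = 1 := by
          rw [Complex.norm_exp_ofReal_mul_I]
        rw [← ih, hrec m, norm_mul, hexp, one_mul]
    -- a m → 0
    have htend : Filter.Tendsto (fun m => ‖a m‖) Filter.atTop (nhds 0) := by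
      have hb : ∀ m, ‖a m‖ ≤ ‖T (inclOp c)‖ * ‖tailLp m g‖ := by
        intro m
        rw [ha]
        simp only
        rw [inner_shiftOp_iterate]
        exact norm_inner_le_norm _ _
      have hlim : Filter.Tendsto (fun m => ‖T (inclOp c)‖ * ‖tailLp m g‖)
          Filter.atTop (nhds 0) := by
        simpa using (tendsto_norm_tailLp g).const_mul ‖T (inclOp c)‖
      exact squeeze_zero (fun m => norm_nonneg _) hb hlim
    -- hence a 0 = 0, hence all a m = 0
    have h0 : ‖a 0‖ = 0 := by
      have : Filter.Tendsto (fun _ : ℕ => ‖a 0‖) Filter.atTop (nhds 0) := by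
        simpa only [hnorm] using htend
      exact tendsto_nhds_unique tendsto_const_nhds this
    have han : a n = 0 := by
      have := hnorm n
      rw [h0] at this
      exact norm_eq_zero.mp this
    calc ⟪T (lp.single 2 n c), g⟫
        = ⟪T (shiftOp^[n] (inclOp c)), g⟫ := by rw [iterate_shiftOp_inclOp]
      _ = ⟪shiftOp^[n] (T (inclOp c)), g⟫ := by rw [hTcommIter]
      _ = 0 := han
  -- now extend to all of `H²_{E₂}` by density of finitely supported sequences
  intro h
  have hs : HasSum (fun n => lp.single 2 n ((h : ℕ → E₂) n)) h :=
    lp.hasSum_single (by norm_num) h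
  have hs2 : HasSum (fun n => T (lp.single 2 n ((h : ℕ → E₂) n))) (T h) := hs.mapL T
  have hs3 : HasSum (fun n => ⟪g, T (lp.single 2 n ((h : ℕ → E₂) n))⟫) ⟪g, T h⟫ :=
    hs2.mapL (innerSL ℂ g)
  have hz : (fun n => ⟪g, T (lp.single 2 n ((h : ℕ → E₂) n))⟫) = fun _ => (0 : ℂ) := by
    funext n
    rw [← inner_conj_symm, key n, map_zero]
  rw [hz] at hs3
  have : ⟪g, T h⟫ = 0 := hs3.unique hasSum_zero
  rw [← inner_conj_symm, this, map_zero]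
end
end

section
/- Let $\mathcal{M}$ be a closed subspace of $H^2_E(\mathbb{T}) \oplus E$ invariant under $B^E_{\sigma, e^{i\theta}}$ with $\mathcal{M} \not\subseteq H^2_E(\mathbb{T}) \oplus \{0\}$. Then $\mathcal{M}_0 := \mathcal{M} \cap (H^2_E(\mathbb{T}) \oplus \{0\})$ is nonzero. -/
open Complex

noncomputable section
set_option linter.unusedSectionVars false

variable {E : Type*} [NormedAddCommGroup E] [InnerProductSpace ℂ E] [CompleteSpace E]

/-- First step of Theorem 2.4: if `M` is a closed invariant subspace of the Brownian shift
not contained in `H²_E(𝕋) ⊕ {0}`, then `M₀ = M ∩ (H²_E(𝕋) ⊕ {0})` is nonzero. -/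
theorem typeII_M0_nonzero
    (σ θ : ℝ) (hσ : 0 < σ) (hθ : θ ∈ Set.Ico 0 (2 * Real.pi))
    (M : Submodule ℂ (Hardy E × E)) (hMc : IsClosed (M : Set (Hardy E × E)))
    (hMinv : ∀ v ∈ M, BS σ θ v ∈ M)
    (hMsub : ∃ v ∈ M, v.2 ≠ 0) :
    ∃ v ∈ M, v ≠ 0 ∧ v.2 = 0 := by
  obtain ⟨v, hvM, hx⟩ := hMsub
  set c : ℂ := Complex.exp (θ * I) with hc
  have hcn : ‖c‖ = 1 := by
    simp [hc, Complex.norm_exp]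
  refine ⟨BS σ θ v - c • v, sub_mem (hMinv v hvM) (M.smul_mem _ hvM), ?_, ?_⟩
  · -- nonzero
    intro h0
    have h1 : shiftOp v.1 + (σ : ℂ) • inclOp v.2 = c • v.1 := by
      have := congrArg Prod.fst h0
      simpa [BS, sub_eq_zero] using this
    have hcoord : ∀ n, shiftSeq (v.1 : ℕ → E) n + (σ : ℂ) • (inclOp v.2 : ℕ → E) n
        = c • (v.1 : ℕ → E) n := by
      intro n
      have := congrFun (congrArg (fun g : Hardy E => (g : ℕ → E)) h1) n
      exact this
    have h0' : (σ : ℂ) • v.2 = c • (v.1 : ℕ → E) 0 := by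
      have := hcoord 0
      simpa [shiftSeq, inclOp, lp.single_apply] using this
    have hsucc : ∀ n, (v.1 : ℕ → E) n = c • (v.1 : ℕ → E) (n + 1) := by
      intro n
      have := hcoord (n + 1)
      simpa [shiftSeq, inclOp, lp.single_apply] using this
    have hnorm : ∀ n, ‖(v.1 : ℕ → E) n‖ = σ * ‖v.2‖ := by
      intro n
      induction n with
      | zero =>
        have : ‖(σ : ℂ) • v.2‖ = ‖c • (v.1 : ℕ → E) 0‖ := by rw [h0']
        simpa [norm_smul, hcn, abs_of_pos hσ] using this.symm
      | succ n ih =>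
        have : ‖(v.1 : ℕ → E) n‖ = ‖c • (v.1 : ℕ → E) (n + 1)‖ := by rw [← hsucc n]
        rw [norm_smul, hcn, one_mul] at this
        rw [← this, ih]
    have hsum : Summable (fun n : ℕ => ‖(v.1 : ℕ → E) n‖ ^ (2 : ℝ)) :=
      (lp.memℓp v.1).summable (by norm_num)
    have hpos : 0 < σ * ‖v.2‖ := mul_pos hσ (norm_pos_iff.mpr hx)
    have hsum' : Summable (fun _ : ℕ => (σ * ‖v.2‖) ^ (2 : ℝ)) := by
      simpa [hnorm] using hsum
    have := hsum'.tendsto_atTop_zero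
    have hconst : (σ * ‖v.2‖) ^ (2 : ℝ) = 0 :=
      tendsto_nhds_unique tendsto_const_nhds this
    exact absurd hconst (ne_of_gt (Real.rpow_pos_of_pos hpos 2))
  · simp [BS, hc]
end
end

section
/- Let $E$ be a Hilbert space and $B = B^E_{\sigma, e^{i\theta}}$ the Brownian shift on $\mathcal{H} = H^2_E(\mathbb{T}) \oplus E$. If $\mathcal{M} \subseteq \mathcal{H}$ is a closed subspace reducing $B$ (invariant under both $B$ and $B^*$) and $(f, x) \in \mathcal{M}$, then $(0, x) \in \mathcal{M}$, $(x, 0) \in \mathcal{M}$ (identifying $x$ with the constant function), and $(f, 0) \in \mathcal{M}$. -/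
open Complex

noncomputable section
set_option linter.unusedSectionVars false

variable {E : Type*} [NormedAddCommGroup E] [InnerProductSpace ℂ E] [CompleteSpace E]

lemma memℓp_tailSeq {f : ℕ → E} (hf : Memℓp f 2) : Memℓp (fun n => f (n + 1)) 2 := by
  have h := hf.summable (by norm_num)
  exact memℓp_gen ((summable_nat_add_iff 1).2 h)

/-- The backward shift `S_E^* : f ↦ (f - f(0))/z` on `H²_E(𝕋)`. -/
def tailOp (f : Hardy E) : Hardy E := ⟨fun n => f (n + 1), memℓp_tailSeq (lp.memℓp f)⟩

/-- The adjoint of the Brownian shift: `(f, y) ↦ (S_E^* f, σ f̂(0) + e^{-iθ} y)`. -/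
def BSadj (σ θ : ℝ) (v : Hardy E × E) : Hardy E × E :=
  (tailOp v.1, (σ : ℂ) • (v.1 : ℕ → E) 0 + Complex.exp (-(θ * I)) • v.2)

/-- Key step of the reducing subspace theorem: if `M` reduces the Brownian shift
(invariant under `B` and `B^*`) and `(f, x) ∈ M`, then `(0, x)`, `(x, 0)` (with `x`
viewed as a constant function) and `(f, 0)` all lie in `M`. -/
theorem reducing_splits
    (σ θ : ℝ) (hσ : 0 < σ) (hθ : θ ∈ Set.Ico 0 (2 * Real.pi))
    (M : Submodule ℂ (Hardy E × E)) (hMc : IsClosed (M : Set (Hardy E × E)))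
    (hB : ∀ v ∈ M, BS σ θ v ∈ M) (hBadj : ∀ v ∈ M, BSadj σ θ v ∈ M)
    (f : Hardy E) (x : E) (hfx : (f, x) ∈ M) :
    ((0 : Hardy E), x) ∈ M ∧ (inclOp x, (0 : E)) ∈ M ∧ (f, (0 : E)) ∈ M := by

  have hexp : Complex.exp (-(θ * I)) * Complex.exp (θ * I) = 1 := by
    rw [← Complex.exp_add, neg_add_cancel, Complex.exp_zero]
  -- B*B (f,x) = (f, (σ² + 1) x)
  have key : BSadj σ θ (BS σ θ (f, x)) = (f, ((σ : ℂ)^2 + 1) • x) := by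
    simp only [BS, BSadj]
    refine Prod.ext ?_ ?_
    · apply Subtype.ext
      funext n
      have : (((shiftOp f + (σ : ℂ) • inclOp x) : Hardy E) : ℕ → E) (n + 1)
          = shiftSeq f (n + 1) + (σ : ℂ) • (lp.single 2 (0 : ℕ) x : ℕ → E) (n + 1) := by
        rw [lp.coeFn_add, lp.coeFn_smul]
        simp [shiftOp, inclOp]
      simp only [tailOp]
      rw [this]
      simp [shiftSeq, lp.single_apply]
    · have h0 : (((shiftOp f + (σ : ℂ) • inclOp x) : Hardy E) : ℕ → E) 0
          = shiftSeq f 0 + (σ : ℂ) • (lp.single 2 (0 : ℕ) x : ℕ → E) 0 := by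
        rw [lp.coeFn_add, lp.coeFn_smul]
        simp [shiftOp, inclOp]
      simp only [h0, shiftSeq, lp.single_apply, if_pos rfl, zero_add, smul_smul, hexp]
      rw [add_smul, one_smul]
      simp [sq]
  have hBB : ((f, ((σ : ℂ)^2 + 1) • x) : Hardy E × E) ∈ M := key ▸ hBadj _ (hB _ hfx)
  have hdiff : (((0 : Hardy E), (σ : ℂ)^2 • x) : Hardy E × E) ∈ M := by
    have := M.sub_mem hBB hfx
    have he : ((f, ((σ : ℂ)^2 + 1) • x) : Hardy E × E) - (f, x)
        = (((0 : Hardy E), (σ : ℂ)^2 • x)) := by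
      refine Prod.ext (by simp) ?_
      simp [add_smul, Prod.snd_sub]
    rwa [he] at this
  have hσ2 : ((σ : ℂ)^2) ≠ 0 := by
    exact pow_ne_zero 2 (by exact_mod_cast hσ.ne')
  have h0x : (((0 : Hardy E), x) : Hardy E × E) ∈ M := by
    have := M.smul_mem (((σ : ℂ)^2)⁻¹) hdiff
    have he : ((σ : ℂ)^2)⁻¹ • (((0 : Hardy E), (σ : ℂ)^2 • x) : Hardy E × E)
        = (((0 : Hardy E), x)) := by
      refine Prod.ext (by simp) ?_
      simp [smul_smul, inv_mul_cancel₀ hσ2]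
    rwa [he] at this
  refine ⟨h0x, ?_, ?_⟩
  · -- B(0,x) - e^{iθ}•(0,x) = (σ • inclOp x, 0), then scale
    have hB0 := hB _ h0x
    have hsub := M.sub_mem hB0 (M.smul_mem (Complex.exp (θ * I)) h0x)
    have he : BS σ θ ((0 : Hardy E), x) - Complex.exp (θ * I) • (((0 : Hardy E), x) : Hardy E × E)
        = (((σ : ℂ) • inclOp x, (0 : E))) := by
      refine Prod.ext ?_ ?_
      · apply Subtype.ext
        funext n
        simp only [BS, Prod.fst_sub, Prod.smul_fst, smul_zero, sub_zero]
        have hcoe : ((shiftOp (0 : Hardy E) + (σ : ℂ) • inclOp x : Hardy E) : ℕ → E) n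
            = shiftSeq ((0 : Hardy E) : ℕ → E) n + (σ : ℂ) • (lp.single 2 (0 : ℕ) x : ℕ → E) n := by
          rw [lp.coeFn_add, lp.coeFn_smul]
          simp [shiftOp, inclOp]
        rw [hcoe]
        have hr : (((σ : ℂ) • inclOp x : Hardy E) : ℕ → E) n
            = (σ : ℂ) • (lp.single 2 (0 : ℕ) x : ℕ → E) n := by rw [lp.coeFn_smul]; simp [inclOp]
        rw [hr]
        cases n <;> simp [shiftSeq]
      · simp [BS]
    rw [he] at hsub
    have := M.smul_mem ((σ : ℂ)⁻¹) hsub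
    have hσne : (σ : ℂ) ≠ 0 := by
      simp only [ne_eq, Complex.ofReal_eq_zero]; exact hσ.ne'
    have he2 : ((σ : ℂ))⁻¹ • (((σ : ℂ) • inclOp x, (0 : E)) : Hardy E × E)
        = ((inclOp x, (0 : E))) := by
      rw [Prod.smul_mk, smul_zero, smul_smul, inv_mul_cancel₀ hσne, one_smul]
    rwa [he2] at this
  · have := M.sub_mem hfx h0x
    have he : ((f, x) : Hardy E × E) - (((0 : Hardy E), x)) = ((f, (0 : E))) := by
      refine Prod.ext (by simp) (by simp)
    rwa [he] at this
end
end

section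
/- For every $\sigma > 0$ and $\theta \in [0, 2\pi)$, the Brownian shift $B_{\sigma, e^{i\theta}}$ on $H^2(\mathbb{T}) \oplus \mathbb{C}$ is irreducible: its only reducing subspaces are $\{0\}$ and the whole space. -/
open Complex

noncomputable section
set_option linter.unusedSectionVars false

variable {E : Type*} [NormedAddCommGroup E] [InnerProductSpace ℂ E] [CompleteSpace E]

lemma aux_tailOp_apply (f : Hardy ℂ) (n : ℕ) : (tailOp f : ℕ → ℂ) n = f (n + 1) := rfl

lemma aux_shiftOp_coe (f : Hardy ℂ) : (shiftOp f : ℕ → ℂ) = shiftSeq f := rfl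

lemma aux_tail_of_BS (σ : ℝ) (f : Hardy ℂ) (c : ℂ) :
    tailOp (shiftOp f + (σ : ℂ) • inclOp c) = f := by
  apply lp.ext
  funext n
  have : (tailOp (shiftOp f + (σ : ℂ) • inclOp c) : ℕ → ℂ) n
      = (shiftOp f + (σ : ℂ) • inclOp c : ℕ → ℂ) (n + 1) := rfl
  rw [this]
  simp only [Pi.add_apply, Pi.smul_apply, aux_shiftOp_coe, shiftSeq]
  rw [show (inclOp c : ℕ → ℂ) (n + 1) = 0 from
    lp.single_apply_ne (E := fun _ : ℕ => ℂ) 2 0 c (by omega)]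
  simp

lemma aux_BS_zero_apply (σ : ℝ) (f : Hardy ℂ) (c : ℂ) :
    (shiftOp f + (σ : ℂ) • inclOp c : ℕ → ℂ) 0 = (σ : ℂ) * c := by
  simp only [Pi.add_apply, Pi.smul_apply, aux_shiftOp_coe, shiftSeq]
  rw [show (inclOp c : ℕ → ℂ) 0 = c from lp.single_apply_self (E := fun _ : ℕ => ℂ) 2 0 c]
  simp

lemma aux_shiftOp_zero : shiftOp (0 : Hardy ℂ) = 0 := by
  apply lp.ext
  funext n
  have : (shiftOp (0 : Hardy ℂ) : ℕ → ℂ) n = shiftSeq (0 : Hardy ℂ) n := rfl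
  rw [this]
  cases n <;> simp [shiftSeq, lp.coeFn_zero]

lemma aux_inclOp_zero : inclOp (0 : ℂ) = 0 := by
  have : inclOp ((0 : ℂ) • (1 : ℂ)) = (0 : ℂ) • inclOp 1 := lp.single_smul (E := fun _ : ℕ => ℂ) 2 0 (0 : ℂ) (1 : ℂ)
  simpa using this

lemma aux_shiftOp_single (n : ℕ) :
    shiftOp (lp.single 2 n (1 : ℂ) : Hardy ℂ) = lp.single 2 (n + 1) (1 : ℂ) := by
  apply lp.ext
  funext j
  have h1 : (shiftOp (lp.single 2 n (1 : ℂ) : Hardy ℂ) : ℕ → ℂ) j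
      = shiftSeq (lp.single 2 n (1 : ℂ) : Hardy ℂ) j := rfl
  rw [h1]
  cases j with
  | zero =>
      rw [show (lp.single 2 (n+1) (1:ℂ) : ℕ → ℂ) 0 = 0 from
        lp.single_apply_ne (E := fun _ : ℕ => ℂ) 2 (n+1) 1 (by omega)]
      simp [shiftSeq]
  | succ k =>
      simp only [shiftSeq]
      by_cases hk : k = n
      · subst hk
        rw [lp.single_apply_self, lp.single_apply_self]
      · rw [lp.single_apply_ne (E := fun _ : ℕ => ℂ) 2 n 1 hk,
          lp.single_apply_ne (E := fun _ : ℕ => ℂ) 2 (n+1) 1 (by omega)]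

/-- The scalar Brownian shift `B_{σ,e^{iθ}}` on `H²(𝕋) ⊕ ℂ` is irreducible: its only
reducing subspaces are `{0}` and the whole space. -/
theorem brownian_shift_irreducible
    (σ θ : ℝ) (hσ : 0 < σ) (hθ : θ ∈ Set.Ico 0 (2 * Real.pi))
    (M : Submodule ℂ (Hardy ℂ × ℂ)) (hMc : IsClosed (M : Set (Hardy ℂ × ℂ)))
    (hB : ∀ v ∈ M, BS σ θ v ∈ M) (hBadj : ∀ v ∈ M, BSadj σ θ v ∈ M) :
    M = ⊥ ∨ M = ⊤ := by
  have hσC : (σ : ℂ) ≠ 0 := by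
    exact_mod_cast (Complex.ofReal_ne_zero.mpr hσ.ne')
  -- B* B v = (v.1, (σ² + 1) v.2)
  have hBB : ∀ v : Hardy ℂ × ℂ, BSadj σ θ (BS σ θ v) = (v.1, ((σ : ℂ)^2 + 1) • v.2) := by
    intro v
    unfold BS BSadj
    refine Prod.ext ?_ ?_
    · exact aux_tail_of_BS σ v.1 v.2
    · show (σ : ℂ) • (shiftOp v.1 + (σ : ℂ) • inclOp v.2 : ℕ → ℂ) 0
          + Complex.exp (-(θ * I)) • (Complex.exp (θ * I) • v.2) = ((σ : ℂ)^2 + 1) • v.2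
      rw [aux_BS_zero_apply, smul_smul, ← Complex.exp_add, neg_add_cancel, Complex.exp_zero]
      simp [smul_eq_mul]
      ring
  -- key: the "second component projection" of any element of M is in M
  have key : ∀ v ∈ M, ((0 : Hardy ℂ), v.2) ∈ M := by
    intro v hv
    have hw : (v.1, ((σ : ℂ)^2 + 1) • v.2) ∈ M := by
      rw [← hBB]; exact hBadj _ (hB v hv)
    have hsub : ((0 : Hardy ℂ), (σ : ℂ)^2 • v.2) ∈ M := by
      have := M.sub_mem hw hv
      have he : (v.1, ((σ : ℂ)^2 + 1) • v.2) - v = ((0 : Hardy ℂ), (σ : ℂ)^2 • v.2) := by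
        refine Prod.ext ?_ ?_
        · simp
        · simp [smul_eq_mul]; ring
      rwa [he] at this
    have := M.smul_mem (((σ : ℂ)^2)⁻¹) hsub
    have he : (((σ : ℂ)^2)⁻¹ : ℂ) • ((0 : Hardy ℂ), (σ : ℂ)^2 • v.2)
        = ((0 : Hardy ℂ), v.2) := by
      refine Prod.ext ?_ ?_
      · simp
      · simp [smul_eq_mul]
        field_simp
    rwa [he] at this
  by_cases hc : ∃ v ∈ M, v.2 ≠ 0
  · right
    obtain ⟨v, hv, hv2⟩ := hc
    -- (0, 1) ∈ M
    have h01 : ((0 : Hardy ℂ), (1 : ℂ)) ∈ M := by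
      have := M.smul_mem (v.2⁻¹) (key v hv)
      have he : (v.2⁻¹ : ℂ) • ((0 : Hardy ℂ), v.2) = ((0 : Hardy ℂ), (1 : ℂ)) := by
        refine Prod.ext ?_ ?_
        · simp
        · simp [smul_eq_mul, inv_mul_cancel₀ hv2]
      rwa [he] at this
    -- (e₀, 0) ∈ M
    have he0 : ((lp.single 2 0 (1 : ℂ) : Hardy ℂ), (0 : ℂ)) ∈ M := by
      have h1 := hB _ h01
      have h2 : BS σ θ ((0 : Hardy ℂ), (1 : ℂ))
          = ((σ : ℂ) • (lp.single 2 0 (1 : ℂ) : Hardy ℂ), Complex.exp (θ * I)) := by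
        unfold BS
        refine Prod.ext ?_ ?_
        · show shiftOp (0 : Hardy ℂ) + (σ : ℂ) • inclOp (1 : ℂ)
              = (σ : ℂ) • (lp.single 2 0 (1 : ℂ) : Hardy ℂ)
          rw [aux_shiftOp_zero]
          simp [inclOp]
        · simp
      rw [h2] at h1
      have h3 := M.sub_mem h1 (M.smul_mem (Complex.exp (θ * I)) h01)
      have he : ((σ : ℂ) • (lp.single 2 0 (1 : ℂ) : Hardy ℂ), Complex.exp (θ * I))
          - Complex.exp (θ * I) • ((0 : Hardy ℂ), (1 : ℂ))
          = ((σ : ℂ) • (lp.single 2 0 (1 : ℂ) : Hardy ℂ), (0 : ℂ)) := by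
        refine Prod.ext ?_ ?_ <;> simp
      rw [he] at h3
      have h4 := M.smul_mem ((σ : ℂ)⁻¹) h3
      have he2 : ((σ : ℂ)⁻¹ : ℂ) • ((σ : ℂ) • (lp.single 2 0 (1 : ℂ) : Hardy ℂ), (0 : ℂ))
          = ((lp.single 2 0 (1 : ℂ) : Hardy ℂ), (0 : ℂ)) := by
        refine Prod.ext ?_ ?_
        · show ((σ : ℂ)⁻¹ : ℂ) • ((σ : ℂ) • (lp.single 2 0 (1 : ℂ) : Hardy ℂ))
              = (lp.single 2 0 (1 : ℂ) : Hardy ℂ)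
          rw [smul_smul, inv_mul_cancel₀ hσC, one_smul]
        · simp
      rwa [he2] at h4
    -- all (eₙ, 0) ∈ M
    have hen : ∀ n, ((lp.single 2 n (1 : ℂ) : Hardy ℂ), (0 : ℂ)) ∈ M := by
      intro n
      induction n with
      | zero => exact he0
      | succ k ih =>
          have h1 := hB _ ih
          have h2 : BS σ θ ((lp.single 2 k (1 : ℂ) : Hardy ℂ), (0 : ℂ))
              = ((lp.single 2 (k+1) (1 : ℂ) : Hardy ℂ), (0 : ℂ)) := by
            unfold BS
            refine Prod.ext ?_ ?_
            · show shiftOp (lp.single 2 k (1 : ℂ) : Hardy ℂ) + (σ : ℂ) • inclOp (0 : ℂ)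
                  = (lp.single 2 (k+1) (1 : ℂ) : Hardy ℂ)
              rw [aux_inclOp_zero, aux_shiftOp_single]
              simp
            · simp
          rwa [h2] at h1
    -- conclude M = ⊤ by density
    rw [eq_top_iff]
    rintro ⟨f, c⟩ -
    have hf0 : ((f : Hardy ℂ), (0 : ℂ)) ∈ M := by
      have hs : HasSum (fun n : ℕ => (lp.single 2 n (f n : ℂ) : Hardy ℂ)) f :=
        lp.hasSum_single (by norm_num) f
      have hps : HasSum (fun n : ℕ => ((lp.single 2 n (f n : ℂ) : Hardy ℂ), (0 : ℂ)))
          ((f : Hardy ℂ), (0 : ℂ)) := hs.prodMk hasSum_zero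
      refine hMc.mem_of_tendsto hps.tendsto_sum_nat
        (Filter.Eventually.of_forall fun m => ?_)
      refine M.sum_mem fun n _ => ?_
      have he : ((lp.single 2 n (f n : ℂ) : Hardy ℂ), (0 : ℂ))
          = (f n : ℂ) • ((lp.single 2 n (1 : ℂ) : Hardy ℂ), (0 : ℂ)) := by
        refine Prod.ext ?_ ?_
        · show (lp.single 2 n (f n : ℂ) : Hardy ℂ) = (f n : ℂ) • lp.single 2 n (1 : ℂ)
          rw [← lp.single_smul]
          simp
        · simp
      rw [he]
      exact M.smul_mem _ (hen n)
    have := M.add_mem hf0 (M.smul_mem c h01)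
    have he : ((f : Hardy ℂ), (0 : ℂ)) + c • ((0 : Hardy ℂ), (1 : ℂ)) = (f, c) := by
      refine Prod.ext ?_ ?_ <;> simp
    rwa [he] at this
  · left
    push_neg at hc
    -- every element of M has vanishing coefficients
    have hz : ∀ k : ℕ, ∀ f : Hardy ℂ, ((f : Hardy ℂ), (0 : ℂ)) ∈ M → (f : ℕ → ℂ) k = 0 := by
      intro k
      induction k with
      | zero =>
          intro f hf
          have h1 := hBadj _ hf
          have h2 : (BSadj σ θ ((f : Hardy ℂ), (0 : ℂ))).2 = (σ : ℂ) * (f : ℕ → ℂ) 0 := by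
            unfold BSadj
            simp [smul_eq_mul]
          have h3 := hc _ h1
          rw [h2] at h3
          exact (mul_eq_zero.mp h3).resolve_left hσC
      | succ k ih =>
          intro f hf
          have h1 := hBadj _ hf
          have h2 : (BSadj σ θ ((f : Hardy ℂ), (0 : ℂ))).1 = tailOp f := rfl
          have h3 : BSadj σ θ ((f : Hardy ℂ), (0 : ℂ)) = (tailOp f, (0 : ℂ)) := by
            refine Prod.ext h2 (hc _ h1)
          rw [h3] at h1
          have := ih (tailOp f) h1
          simpa [aux_tailOp_apply] using this
    rw [eq_bot_iff]
    rintro ⟨f, c⟩ hv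
    have hc2 : c = 0 := hc _ hv
    subst hc2
    have hf : ∀ k, (f : ℕ → ℂ) k = 0 := fun k => hz k f hv
    have : f = 0 := by
      apply lp.ext
      funext n
      simpa using hf n
    simp [this, Submodule.mem_bot]
end
end
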